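/- Let L>0 and let a, b, λ : ℤ → ℝ be sequences such that: a_j ≤ λ_j ≤ b_j for all j; b_j < a_{j+1} for all j (the intervals [a_j,b_j] are pairwise disjoint and ordered); and there exists C > 0 such that |a_j − πj/(2L)| ≤ C/|j| and |b_j − πj/(2L)| ≤ C/|j| for all j ≠ 0. Fix k ∈ ℤ. Then the infinite product over j ∈ ℤ, j ≠ k, of the positive factors sqrt(|(λ_k − a_j)(λ_k − b_j)|) / |λ_k − λ_j| converges to a finite nonzero limit (the family of factors is multipliable). -/

import Mathlib

set_option autoImplicit false

private lemma abs_log_le_two_mul {r : ℝ} (h : 1/2 ≤ r) : |Real.log r| ≤ 2 * |r - 1| := by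
  have hr : 0 < r := by linarith
  rcases le_or_gt 1 r with h1 | h1
  · rw [abs_of_nonneg (Real.log_nonneg h1), abs_of_nonneg (by linarith)]
    have := Real.log_le_sub_one_of_pos hr
    linarith
  · have hlog : Real.log r < 0 := Real.log_neg hr h1
    rw [abs_of_neg hlog, abs_of_neg (by linarith)]
    have hinv : Real.log r⁻¹ ≤ r⁻¹ - 1 := Real.log_le_sub_one_of_pos (by positivity)
    rw [Real.log_inv] at hinv
    have h2 : r⁻¹ - 1 = (1 - r) / r := by field_simp
    rw [h2] at hinv
    have h3 : (1 - r) / r ≤ 2 * (1 - r) := by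
      rw [div_le_iff₀ hr]
      nlinarith
    linarith

set_option maxHeartbeats 1000000 in
/-- Under the gap asymptotics `aⱼ, bⱼ = πj/(2L) + O(1/|j|)`, with `λⱼ ∈ [aⱼ, bⱼ]` and the
intervals `[aⱼ, bⱼ]` pairwise disjoint and ordered, the infinite product
`∏_{j ≠ k} sqrt(|(λₖ − aⱼ)(λₖ − bⱼ)|)/|λₖ − λⱼ|` converges to a finite nonzero limit. -/
theorem residue_product_multipliable
    (L : ℝ) (hL : 0 < L) (a b lam : ℤ → ℝ)
    (hin : ∀ j, a j ≤ lam j ∧ lam j ≤ b j)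
    (hord : ∀ j, b j < a (j + 1))
    (C : ℝ) (hC : 0 < C)
    (hasymp : ∀ j : ℤ, j ≠ 0 →
      |a j - Real.pi * j / (2 * L)| ≤ C / |(j : ℝ)| ∧
      |b j - Real.pi * j / (2 * L)| ≤ C / |(j : ℝ)|)
    (k : ℤ) :
    ∃ P : ℝ, P ≠ 0 ∧
      HasProd (fun j : {j : ℤ // j ≠ k} =>
        Real.sqrt |(lam k - a j) * (lam k - b j)| / |lam k - lam j|) P := by
  set x := lam k with hxdef
  -- ordering of the gaps
  have hba : ∀ i j : ℤ, i < j → b i < a j := by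
    intro i j hij
    have key : ∀ n : ℕ, b i < a (i + 1 + n) := by
      intro n
      induction n with
      | zero => simpa using hord i
      | succ m ih =>
        have h1 : a (i + 1 + m) ≤ lam (i + 1 + m) := (hin _).1
        have h2 : lam (i + 1 + m) ≤ b (i + 1 + m) := (hin _).2
        have h3 := hord (i + 1 + m)
        have h4 : (i + 1 + (m + 1 : ℕ) : ℤ) = (i + 1 + m) + 1 := by push_cast; ring
        rw [h4]
        linarith
    have hj' : j = i + 1 + ((j - i - 1).toNat : ℤ) := by omega
    rw [hj']
    exact key _
  -- nonvanishing of all factors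
  have hpos : ∀ j : ℤ, j ≠ k → 0 < |x - a j| ∧ 0 < |x - b j| ∧ 0 < |x - lam j| := by
    intro j hj
    rcases lt_or_gt_of_ne hj with h | h
    · have h1 : b j < lam k := lt_of_lt_of_le (hba j k h) (hin k).1
      have h2 : a j ≤ lam j := (hin j).1
      have h3 : lam j ≤ b j := (hin j).2
      exact ⟨abs_pos.mpr (by simp only [hxdef]; intro hc; nlinarith [sub_eq_zero.mp hc]),
        abs_pos.mpr (by simp only [hxdef]; intro hc; nlinarith [sub_eq_zero.mp hc]),
        abs_pos.mpr (by simp only [hxdef]; intro hc; nlinarith [sub_eq_zero.mp hc])⟩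
    · have h1 : lam k < a j := lt_of_le_of_lt (hin k).2 (hba k j h)
      have h2 : a j ≤ lam j := (hin j).1
      have h3 : lam j ≤ b j := (hin j).2
      exact ⟨abs_pos.mpr (by simp only [hxdef]; intro hc; nlinarith [sub_eq_zero.mp hc]),
        abs_pos.mpr (by simp only [hxdef]; intro hc; nlinarith [sub_eq_zero.mp hc]),
        abs_pos.mpr (by simp only [hxdef]; intro hc; nlinarith [sub_eq_zero.mp hc])⟩
  -- the factors are positive
  have hfpos : ∀ j : ℤ, j ≠ k →
      0 < Real.sqrt |(x - a j) * (x - b j)| / |x - lam j| := by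
    intro j hj
    obtain ⟨hA, hB, hD⟩ := hpos j hj
    apply div_pos _ hD
    apply Real.sqrt_pos.mpr
    rw [abs_mul]
    exact mul_pos hA hB
  -- asymptotics for lam
  have hlam_asymp : ∀ j : ℤ, j ≠ 0 → |lam j - Real.pi * j / (2 * L)| ≤ C / |(j : ℝ)| := by
    intro j hj
    obtain ⟨hA, hB⟩ := hasymp j hj
    rw [abs_le] at hA hB ⊢
    have h2 : a j ≤ lam j := (hin j).1
    have h3 : lam j ≤ b j := (hin j).2
    constructor <;> linarith [hA.1, hA.2, hB.1, hB.2]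
  set δ : ℝ := Real.pi / (4 * L) with hδdef
  have hδ : 0 < δ := by positivity
  set M : ℝ := |x| with hMdef
  set K : ℝ := 4 * C / δ with hKdef
  have hK : 0 < K := by positivity
  obtain ⟨N, hN⟩ := exists_nat_gt ((C + M) / δ + 4 * C / δ + 1 + |(k : ℝ)|)
  have hMnn : 0 ≤ M := abs_nonneg _
  have hkr : |(k : ℝ)| < N := by
    have h1 : 0 ≤ (C + M) / δ := by positivity
    have h2 : 0 ≤ 4 * C / δ := by positivity
    linarith
  -- the log of each factor
  set F : ℤ → ℝ := fun j => Real.log (Real.sqrt |(x - a j) * (x - b j)| / |x - lam j|)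
    with hFdef
  -- the key quantitative bound
  have hbound : ∀ j : ℤ, (N : ℝ) ≤ |(j : ℝ)| → ‖F j‖ ≤ K / (j : ℝ) ^ 2 := by
    intro j hj
    have hj1 : (1 : ℝ) ≤ |(j : ℝ)| := by
      have : (1 : ℝ) ≤ N := by
        have h1 : 0 ≤ (C + M) / δ := by positivity
        have h2 : 0 ≤ 4 * C / δ := by positivity
        have h3 : 0 ≤ |(k : ℝ)| := abs_nonneg _
        linarith
      linarith
    have hj0 : j ≠ 0 := by
      intro h; rw [h] at hj1; simp at hj1; linarith
    have hjabs : 0 < |(j : ℝ)| := by linarith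
    have hj2 : (j : ℝ) ^ 2 = |(j : ℝ)| * |(j : ℝ)| := by
      rw [abs_mul_abs_self]; ring
    have hj2pos : 0 < (j : ℝ) ^ 2 := by rw [hj2]; positivity
    -- |d_j| in terms of δ
    have hd : |Real.pi * (j : ℝ) / (2 * L)| = 2 * δ * |(j : ℝ)| := by
      rw [abs_div, abs_mul, abs_of_nonneg Real.pi_pos.le,
        abs_of_nonneg (by positivity : (0:ℝ) ≤ 2 * L), hδdef]
      field_simp; ring
    have hCj : C / |(j : ℝ)| ≤ C := div_le_self hC.le hj1
    have hCjpos : 0 < C / |(j : ℝ)| := by positivity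
    have hdN : (C + M) / δ ≤ |(j : ℝ)| := by
      have h2 : 0 ≤ 4 * C / δ := by positivity
      have h3 : 0 ≤ |(k : ℝ)| := abs_nonneg _
      linarith
    have hCM : C + M ≤ δ * |(j : ℝ)| := by
      rw [div_le_iff₀ hδ] at hdN; linarith
    -- lower bound on the distance |x - lam j|
    have hlamlow : 2 * δ * |(j : ℝ)| - C / |(j : ℝ)| ≤ |lam j| := by
      have h1 := hlam_asymp j hj0
      have h2 : |Real.pi * (j : ℝ) / (2 * L)| - |lam j| ≤ |lam j - Real.pi * j / (2 * L)| := by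
        have := abs_sub_abs_le_abs_sub (Real.pi * (j : ℝ) / (2 * L)) (lam j)
        rw [abs_sub_comm] at this
        linarith
      rw [hd] at h2
      linarith
    have hDlow : δ * |(j : ℝ)| ≤ |x - lam j| := by
      have h1 : |lam j| - |x| ≤ |x - lam j| := by
        have := abs_sub_abs_le_abs_sub (lam j) x
        rw [abs_sub_comm] at this
        linarith
      have : M = |x| := hMdef
      linarith
    have hD : 0 < |x - lam j| := lt_of_lt_of_le (by positivity) hDlow
    -- gap sizes
    have hgapA : |a j - lam j| ≤ 2 * C / |(j : ℝ)| := by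
      have h1 := (hasymp j hj0).1
      have h2 := hlam_asymp j hj0
      calc |a j - lam j| = |(a j - Real.pi * j / (2 * L)) - (lam j - Real.pi * j / (2 * L))| := by
            ring_nf
        _ ≤ |a j - Real.pi * j / (2 * L)| + |lam j - Real.pi * j / (2 * L)| := abs_sub _ _
        _ ≤ C / |(j : ℝ)| + C / |(j : ℝ)| := add_le_add h1 h2
        _ = 2 * C / |(j : ℝ)| := by ring
    have hgapB : |b j - lam j| ≤ 2 * C / |(j : ℝ)| := by
      have h1 := (hasymp j hj0).2
      have h2 := hlam_asymp j hj0
      calc |b j - lam j| = |(b j - Real.pi * j / (2 * L)) - (lam j - Real.pi * j / (2 * L))| := by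
            ring_nf
        _ ≤ |b j - Real.pi * j / (2 * L)| + |lam j - Real.pi * j / (2 * L)| := abs_sub _ _
        _ ≤ C / |(j : ℝ)| + C / |(j : ℝ)| := add_le_add h1 h2
        _ = 2 * C / |(j : ℝ)| := by ring
    -- the ratios
    set rA : ℝ := |x - a j| / |x - lam j| with hrAdef
    set rB : ℝ := |x - b j| / |x - lam j| with hrBdef
    have hratio : ∀ (u : ℝ), |u - lam j| ≤ 2 * C / |(j : ℝ)| →
        abs (|x - u| / |x - lam j| - 1) ≤ (2 * C / δ) / (j : ℝ) ^ 2 := by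
      intro u hu
      have h1 : |x - u| / |x - lam j| - 1 = (|x - u| - |x - lam j|) / |x - lam j| := by
        field_simp
      rw [h1, abs_div, abs_of_pos hD]
      have h2 : abs (|x - u| - |x - lam j|) ≤ |u - lam j| := by
        have := abs_abs_sub_abs_le_abs_sub (x - u) (x - lam j)
        have heq : (x - u) - (x - lam j) = -(u - lam j) := by ring
        rw [heq, abs_neg] at this
        exact this
      have h3 : abs (|x - u| - |x - lam j|) ≤ 2 * C / |(j : ℝ)| := le_trans h2 hu
      calc abs (|x - u| - |x - lam j|) / |x - lam j|
          ≤ (2 * C / |(j : ℝ)|) / (δ * |(j : ℝ)|) := by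
            apply div_le_div₀ (by positivity) h3 (by positivity) hDlow
        _ = (2 * C / δ) / (j : ℝ) ^ 2 := by
            rw [hj2]
            field_simp [hj0, hδ.ne']
    have hrA1 := hratio (a j) hgapA
    have hrB1 := hratio (b j) hgapB
    rw [← hrAdef] at hrA1
    rw [← hrBdef] at hrB1
    -- smallness
    have hsmall : (2 * C / δ) / (j : ℝ) ^ 2 ≤ 1 / 2 := by
      have h4C : 4 * C / δ ≤ |(j : ℝ)| := by
        have h3 : 0 ≤ |(k : ℝ)| := abs_nonneg _
        have h1 : 0 ≤ (C + M) / δ := by positivity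
        linarith
      have hjj : 4 * C / δ ≤ (j : ℝ) ^ 2 := by
        rw [hj2]
        calc 4 * C / δ ≤ |(j : ℝ)| := h4C
          _ = |(j : ℝ)| * 1 := (mul_one _).symm
          _ ≤ |(j : ℝ)| * |(j : ℝ)| := by nlinarith
      rw [div_le_div_iff₀ hj2pos (by norm_num : (0:ℝ) < 2)]
      calc 2 * C / δ * 2 = 4 * C / δ := by ring
        _ ≤ (j : ℝ) ^ 2 := hjj
        _ = 1 * (j : ℝ) ^ 2 := (one_mul _).symm
    have hrAhalf : 1 / 2 ≤ rA := by
      have := neg_abs_le (rA - 1)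
      linarith
    have hrBhalf : 1 / 2 ≤ rB := by
      have := neg_abs_le (rB - 1)
      linarith
    have hApos : 0 < |x - a j| := by
      have : 0 < rA := by linarith
      rw [hrAdef, div_pos_iff] at this
      rcases this with ⟨h, _⟩ | ⟨_, h⟩
      · exact h
      · linarith
    have hBpos : 0 < |x - b j| := by
      have : 0 < rB := by linarith
      rw [hrBdef, div_pos_iff] at this
      rcases this with ⟨h, _⟩ | ⟨_, h⟩
      · exact h
      · linarith
    -- decompose the log
    have hFj : F j = Real.log rA / 2 + Real.log rB / 2 := by
      have hsq : Real.sqrt |(x - a j) * (x - b j)| ≠ 0 := by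
        apply ne_of_gt
        apply Real.sqrt_pos.mpr
        rw [abs_mul]; positivity
      rw [hFdef]
      simp only
      rw [Real.log_div hsq hD.ne', Real.log_sqrt (abs_nonneg _), abs_mul,
        Real.log_mul hApos.ne' hBpos.ne',
        hrAdef, hrBdef, Real.log_div hApos.ne' hD.ne', Real.log_div hBpos.ne' hD.ne']
      ring
    have hlogA : |Real.log rA| ≤ 2 * ((2 * C / δ) / (j : ℝ) ^ 2) := by
      calc |Real.log rA| ≤ 2 * |rA - 1| := abs_log_le_two_mul hrAhalf
        _ ≤ 2 * ((2 * C / δ) / (j : ℝ) ^ 2) := by linarith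
    have hlogB : |Real.log rB| ≤ 2 * ((2 * C / δ) / (j : ℝ) ^ 2) := by
      calc |Real.log rB| ≤ 2 * |rB - 1| := abs_log_le_two_mul hrBhalf
        _ ≤ 2 * ((2 * C / δ) / (j : ℝ) ^ 2) := by linarith
    rw [Real.norm_eq_abs, hFj]
    have h5 : K / (j : ℝ) ^ 2 = 2 * ((2 * C / δ) / (j : ℝ) ^ 2) := by
      rw [hKdef]; field_simp; ring
    calc |Real.log rA / 2 + Real.log rB / 2|
        ≤ |Real.log rA / 2| + |Real.log rB / 2| := abs_add_le _ _
      _ = |Real.log rA| / 2 + |Real.log rB| / 2 := by rw [abs_div, abs_div]; norm_num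
      _ ≤ (2 * ((2 * C / δ) / (j : ℝ) ^ 2)) / 2 + (2 * ((2 * C / δ) / (j : ℝ) ^ 2)) / 2 := by
          linarith
      _ = K / (j : ℝ) ^ 2 := by rw [h5]; ring
  -- summability of F
  have hgsum : Summable (fun j : ℤ => K / (j : ℝ) ^ 2) := by
    have := (Real.summable_one_div_int_pow (p := 2)).mpr one_lt_two
    exact (this.mul_left K).congr fun j => by ring
  have hFsum : Summable F := by
    apply Summable.of_norm_bounded_eventually hgsum
    rw [Filter.eventually_cofinite]
    apply Set.Finite.subset (Set.finite_Icc (-(N : ℤ)) (N : ℤ))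
    intro j hj
    simp only [Set.mem_setOf_eq] at hj
    simp only [Set.mem_Icc]
    by_contra hc
    apply hj
    apply hbound
    rw [← Int.cast_abs]
    have hNj : (N : ℤ) ≤ |j| := by rw [Int.abs_eq_natAbs]; omega
    exact_mod_cast hNj
  -- restrict to the subtype and exponentiate
  have hFsub : Summable (fun j : {j : ℤ // j ≠ k} => F j) :=
    hFsum.subtype {j : ℤ | j ≠ k}
  obtain ⟨S, hS⟩ := hFsub
  refine ⟨Real.exp S, Real.exp_ne_zero S, ?_⟩
  have hprod := hS.rexp
  have heq : (fun j : {j : ℤ // j ≠ k} =>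
      Real.sqrt |(lam k - a j) * (lam k - b j)| / |lam k - lam j|) =
      Real.exp ∘ (fun j : {j : ℤ // j ≠ k} => F j) := by
    funext j
    simp only [Function.comp_apply, hFdef]
    rw [Real.exp_log (hfpos j j.2)]
  rw [heq]
  exact hprod
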